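/- Let (G,X*) be a contracting self-similar action with nucleus N. Define U ⊂ X^{-ω} as the set of sequences w such that every left-infinite path in the Moore diagram of N labeled by (w,w) ends at the identity element. Then U is open and dense in X^{-ω}, has Bernoulli measure 1 (for any Bernoulli measure with positive letter weights), and U is saturated with respect to the asymptotic equivalence relation on X^{-ω} (if w ∈ U and w' is asymptotically equivalent to w, then w' ∈ U). -/

import Mathlib

open MeasureTheory ENNReal

/-- A self-similar action of the group `G` over the alphabet `X`, given by the action
`g(xw) = (toFun g x) ((res g x) w)` on words: `toFun g` is the action on the first letter and
`res g x = g|_x` is the restriction. -/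
structure SSA (G X : Type*) [Group G] where
  toFun : G → X → X
  res : G → X → G
  toFun_one : ∀ x, toFun 1 x = x
  res_one : ∀ x, res 1 x = 1
  toFun_mul : ∀ g h x, toFun (g * h) x = toFun g (toFun h x)
  res_mul : ∀ g h x, res (g * h) x = res g (toFun h x) * res h x

namespace SSA

variable {G X : Type*} [Group G]

/-- Restriction of `g` along a finite word (head of the list = first letter read):
`g|_{x₁x₂…xₙ} = g|_{x₁}|_{x₂}…|_{xₙ}`. -/
def resW (S : SSA G X) : G → List X → G
  | g, [] => g
  | g, x :: v => S.resW (S.res g x) v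

/-- Action of `g` on a finite word (head of the list = first letter read):
`g(xw) = g(x) (g|_x)(w)`. -/
def actW (S : SSA G X) : G → List X → List X
  | _, [] => []
  | g, x :: v => S.toFun g x :: S.actW (S.res g x) v

/-- `N` is the nucleus of the (contracting) action: it is closed under restrictions, every
element restricts into `N` on all sufficiently long words, and it is the smallest such set. -/
def IsNucleus (S : SSA G X) (N : Finset G) : Prop :=
  (∀ g ∈ N, ∀ x : X, S.res g x ∈ N) ∧
  (∀ g : G, ∃ k : ℕ, ∀ v : List X, k ≤ v.length → S.resW g v ∈ N) ∧
  ∀ N' : Finset G, (∀ g : G, ∃ k : ℕ, ∀ v : List X, k ≤ v.length → S.resW g v ∈ N') → N ⊆ N'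

/-- There is a left-infinite path in the Moore diagram of the nucleus `N` which ends at the
vertex `h` and whose `i`-th edge is labeled `(w i, w' i)` (sequences are left-infinite,
index `0` being the rightmost letter): the vertices `q i ∈ N` satisfy
`q (i+1)|_{w i} = q i` and `q (i+1) (w i) = w' i`, with `q 0 = h`. -/
def MoorePath (S : SSA G X) (N : Finset G) (w w' : ℕ → X) (h : G) : Prop :=
  ∃ q : ℕ → G, q 0 = h ∧ (∀ i, q i ∈ N) ∧
    ∀ i : ℕ, S.res (q (i + 1)) (w i) = q i ∧ S.toFun (q (i + 1)) (w i) = w' i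

/-- The asymptotic equivalence relation on `X^{-ω} × G`: `w·g ~ w'·g'` iff there is a
left-infinite path in the Moore diagram of the nucleus labeled `(w, w')` ending at `g'g⁻¹`. -/
def AsympEquiv (S : SSA G X) (N : Finset G) (p q : (ℕ → X) × G) : Prop :=
  S.MoorePath N p.1 q.1 (q.2 * p.2⁻¹)

/-- The limit `G`-space: the quotient of `X^{-ω} × G` by the asymptotic equivalence relation. -/
def LimitGSpace (S : SSA G X) (N : Finset G) : Type _ :=
  Quot (S.AsympEquiv N)

/-- The tile `𝒯_v ⊂ J_G` for a finite word `v` (encoded as a list whose head is the rightmost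
letter): the image in the limit `G`-space of `X^{-ω}v × {1}`.  For `v = []` this is the tile `𝒯`,
the image of `X^{-ω} × {1}`. -/
def Tile (S : SSA G X) (N : Finset G) (v : List X) : Set (S.LimitGSpace N) :=
  Quot.mk (S.AsympEquiv N) ''
    {p : (ℕ → X) × G | p.2 = 1 ∧ ∀ (i : ℕ) (h : i < v.length), p.1 i = v.get ⟨i, h⟩}

/-- The translated tile `𝒯·g`: the image in the limit `G`-space of `X^{-ω} × {g}`. -/
def TileT (S : SSA G X) (N : Finset G) (g : G) : Set (S.LimitGSpace N) :=
  Quot.mk (S.AsympEquiv N) '' {p : (ℕ → X) × G | p.2 = g}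

variable [MeasurableSpace X] [MeasurableSpace G]

instance (S : SSA G X) (N : Finset G) : MeasurableSpace (S.LimitGSpace N) :=
  inferInstanceAs (MeasurableSpace (Quot (S.AsympEquiv N)))

/-- The measure `μ` on the limit `G`-space: the push-forward under the quotient map of the
product of the (uniform Bernoulli) measure `μ0` on `X^{-ω}` and the counting measure on `G`. -/
noncomputable def limitMeasure (S : SSA G X) (N : Finset G) (μ0 : Measure (ℕ → X)) :
    Measure (S.LimitGSpace N) :=
  Measure.map (Quot.mk (S.AsympEquiv N)) (μ0.prod Measure.count)

end SSA

/-- The cylinder subset of `X^{-ω}` of sequences whose last `u.length` letters spell `u`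
(head of `u` = rightmost letter). -/
def Cyl {X : Type*} (u : List X) : Set (ℕ → X) :=
  {w | ∀ (i : ℕ) (h : i < u.length), w i = u.get ⟨i, h⟩}

/-- The set `𝒰` of left-infinite sequences `w` such that every left-infinite path in the Moore
diagram of the nucleus labeled `(w, w)` ends at the identity. -/
def USet {G X : Type*} [Group G] (S : SSA G X) (N : Finset G) : Set (ℕ → X) :=
  {w | ∀ q : ℕ → G, (∀ i, q i ∈ N) →
    (∀ i : ℕ, S.res (q (i + 1)) (w i) = q i ∧ S.toFun (q (i + 1)) (w i) = w i) → q 0 = 1}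

set_option linter.dupNamespace false
set_option linter.unusedSectionVars false
set_option linter.unusedVariables false

namespace SSA
variable {G X : Type*} [Group G] (S : SSA G X)

lemma actW_one : ∀ v : List X, S.actW 1 v = v
  | [] => rfl
  | x :: v => by simp [actW, S.toFun_one, S.res_one, actW_one v]

lemma actW_length (g : G) : ∀ v : List X, (S.actW g v).length = v.length := by
  intro v
  induction v generalizing g with
  | nil => rfl
  | cons x v ih => simp [actW, ih]

lemma resW_append (g : G) (u v : List X) : S.resW g (u ++ v) = S.resW (S.resW g u) v := by
  induction u generalizing g with
  | nil => rfl
  | cons x u ih => simp [resW, ih]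

lemma actW_append (g : G) (u v : List X) :
    S.actW g (u ++ v) = S.actW g u ++ S.actW (S.resW g u) v := by
  induction u generalizing g with
  | nil => rfl
  | cons x u ih => simp [actW, resW, ih]

lemma toFun_inv (g : G) (x : X) : S.toFun g⁻¹ (S.toFun g x) = x := by
  rw [← S.toFun_mul, inv_mul_cancel, S.toFun_one]

lemma res_inv (g : G) (x : X) : S.res g⁻¹ (S.toFun g x) = (S.res g x)⁻¹ := by
  have h := S.res_mul g⁻¹ g x
  rw [inv_mul_cancel, S.res_one] at h
  exact eq_inv_of_mul_eq_one_left h.symm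

lemma resW_mem {N : Finset G} (hcl : ∀ g ∈ N, ∀ x : X, S.res g x ∈ N)
    {g : G} (hg : g ∈ N) : ∀ v : List X, S.resW g v ∈ N := by
  intro v
  induction v generalizing g with
  | nil => exact hg
  | cons x v ih => exact ih (hcl g hg x)

/-- `segFrom w m n = [w (m+n-1), …, w m]`. -/
def segFrom (w : ℕ → X) (m : ℕ) : ℕ → List X
  | 0 => []
  | n + 1 => w (m + n) :: segFrom w m n

lemma segFrom_length (w : ℕ → X) (m : ℕ) : ∀ n, (segFrom w m n).length = n
  | 0 => rfl
  | n + 1 => by simp [segFrom, segFrom_length w m n]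

lemma segFrom_congr {w w' : ℕ → X} {m m' : ℕ} :
    ∀ n, (∀ i < n, w (m + i) = w' (m' + i)) → segFrom w m n = segFrom w' m' n
  | 0, _ => rfl
  | n + 1, h => by
    simp only [segFrom]
    rw [h n (Nat.lt_succ_self n), segFrom_congr n fun i hi => h i (Nat.lt_succ_of_lt hi)]

lemma path_resW {w : ℕ → X} {q : ℕ → G}
    (hq : ∀ i : ℕ, S.res (q (i + 1)) (w i) = q i) (m : ℕ) :
    ∀ n, S.resW (q (m + n)) (segFrom w m n) = q m := by
  intro n
  induction n with
  | zero => rfl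
  | succ n ih =>
    show S.resW (q (m + n + 1)) (w (m + n) :: segFrom w m n) = q m
    simp only [resW, hq (m + n), ih]

lemma path_actW {w : ℕ → X} {q : ℕ → G}
    (hq : ∀ i : ℕ, S.res (q (i + 1)) (w i) = q i ∧ S.toFun (q (i + 1)) (w i) = w i) (m : ℕ) :
    ∀ n, S.actW (q (m + n)) (segFrom w m n) = segFrom w m n := by
  intro n
  induction n with
  | zero => rfl
  | succ n ih =>
    show S.actW (q (m + n + 1)) (w (m + n) :: segFrom w m n) = _
    simp only [actW, (hq (m + n)).1, (hq (m + n)).2, ih, segFrom]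


/-- Key word lemma: there is a word `V` such that every nucleus element fixing `V`
restricts to the identity along `V`. -/
lemma exists_keyword (N : Finset G) (hcl : ∀ g ∈ N, ∀ x : X, S.res g x ∈ N)
    (hfaith : ∀ h ∈ N, h ≠ 1 → ∃ v : List X, S.actW h v ≠ v) :
    ∃ V : List X, ∀ h ∈ N, S.actW h V = V → S.resW h V = 1 := by
  classical
  -- T V = set of restrictions of fixing elements
  set T : List X → Finset G := fun V =>
    (N.filter fun h => S.actW h V = V).image fun h => S.resW h V with hT
  suffices H : ∀ n (V : List X), (T V).card ≤ n → ∃ V' : List X, ∀ g ∈ T V', g = 1 by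
    obtain ⟨V', hV'⟩ := H (T []).card [] le_rfl
    refine ⟨V', fun h hh hfix => hV' _ ?_⟩
    exact Finset.mem_image.2 ⟨h, Finset.mem_filter.2 ⟨hh, hfix⟩, rfl⟩
  intro n
  induction n with
  | zero =>
    intro V hV
    exact ⟨V, fun g hg => absurd (Finset.card_pos.2 ⟨g, hg⟩) (by omega)⟩
  | succ n ih =>
    intro V hV
    by_cases htriv : ∀ g ∈ T V, g = 1
    · exact ⟨V, htriv⟩
    · push_neg at htriv
      obtain ⟨g, hgT, hg1⟩ := htriv
      obtain ⟨h, hh, hres⟩ := Finset.mem_image.1 hgT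
      have hhN := (Finset.mem_filter.1 hh).1
      have hgN : g ∈ N := hres ▸ S.resW_mem hcl hhN V
      obtain ⟨v, hv⟩ := hfaith g hgN hg1
      -- T (V ++ v) has smaller cardinality
      have hsub : T (V ++ v) ⊆ ((T V).filter fun a => S.actW a v = v).image
          fun a => S.resW a v := by
        intro b hb
        obtain ⟨h', hh', rfl⟩ := Finset.mem_image.1 hb
        obtain ⟨hh'N, hfix⟩ := Finset.mem_filter.1 hh'
        rw [S.actW_append] at hfix
        have hlen : (S.actW h' V).length = V.length := S.actW_length _ _
        have h1 : S.actW h' V = V := by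
          have := List.append_inj hfix (by omega)
          exact this.1
        have h2 : S.actW (S.resW h' V) v = v := by
          have := List.append_inj hfix (by omega)
          exact this.2
        refine Finset.mem_image.2 ⟨S.resW h' V, Finset.mem_filter.2 ⟨?_, h2⟩, ?_⟩
        · exact Finset.mem_image.2 ⟨h', Finset.mem_filter.2 ⟨hh'N, h1⟩, rfl⟩
        · rw [S.resW_append]
      have hcard : (T (V ++ v)).card < (T V).card := by
        calc (T (V ++ v)).card ≤ _ := Finset.card_le_card hsub
          _ ≤ ((T V).filter fun a => S.actW a v = v).card := Finset.card_image_le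
          _ < (T V).card := by
            refine Finset.card_lt_card ⟨Finset.filter_subset _ _, ?_⟩
            intro hss
            have := Finset.mem_filter.1 (hss hgT)
            exact hv this.2
      exact ih (V ++ v) (by omega)

variable {N : Finset G}

/-- If some element below the index `m` of a path is `1`, then `q 0 = 1`. -/
lemma path_bot {w : ℕ → X} {q : ℕ → G}
    (hq : ∀ i : ℕ, S.res (q (i + 1)) (w i) = q i) {m : ℕ} (hm : q m = 1) : q 0 = 1 := by
  have key : ∀ j, q (m - j) = 1 := by
    intro j
    induction j with
    | zero => exact hm
    | succ j ih =>
      rcases Nat.lt_or_ge j m with hj | hj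
      · have hstep : m - j = (m - (j + 1)) + 1 := by omega
        have := hq (m - (j + 1))
        rw [← hstep, ih] at this
        rw [← this, S.res_one]
      · have : m - (j+1) = m - j := by omega
        rw [this, ih]
  have := key m
  simpa using this

/-- If `w` contains the key word `V` as a block at position `m`, then `w ∈ USet`. -/
lemma block_mem_USet {V : List X} (hV : ∀ h ∈ N, S.actW h V = V → S.resW h V = 1)
    {w : ℕ → X} {m : ℕ} (hblk : segFrom w m V.length = V) : w ∈ USet S N := by
  intro q hqN hq
  have hres := S.path_resW (fun i => (hq i).1) m V.length
  have hact := S.path_actW hq m V.length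
  rw [hblk] at hres hact
  have : q m = 1 := by rw [← hres]; exact hV _ (hqN _) hact
  exact S.path_bot (fun i => (hq i).1) this

/-- Finite-path construction: an element of `N` fixing `segFrom w 0 n` yields a path. -/
lemma exists_finpath (hcl : ∀ g ∈ N, ∀ x : X, S.res g x ∈ N) {w : ℕ → X} :
    ∀ n, ∀ h ∈ N, S.actW h (segFrom w 0 n) = segFrom w 0 n →
      ∃ q : ℕ → G, q 0 = S.resW h (segFrom w 0 n) ∧ q n = h ∧ (∀ i, q i ∈ N) ∧
        ∀ i < n, S.res (q (i + 1)) (w i) = q i ∧ S.toFun (q (i + 1)) (w i) = w i := by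
  intro n
  induction n with
  | zero => exact fun h hh _ => ⟨fun _ => h, rfl, rfl, fun _ => hh, fun i hi => by omega⟩
  | succ n ih =>
    intro h hh hfix
    have hseg : segFrom w 0 (n + 1) = w n :: segFrom w 0 n := by simp [segFrom]
    rw [hseg] at hfix
    simp only [actW, List.cons.injEq] at hfix
    obtain ⟨hfix1, hfix2⟩ := hfix
    obtain ⟨q', hq'0, hq'n, hq'N, hq'rel⟩ := ih (S.res h (w n)) (hcl h hh (w n)) hfix2
    refine ⟨fun i => if i ≤ n then q' i else h, ?_, ?_, ?_, ?_⟩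
    · simp only [Nat.zero_le, if_pos]
      rw [hq'0, hseg]; rfl
    · simp
    · intro i
      by_cases hi : i ≤ n <;> simp [hi, hq'N, hh]
    · intro i hi
      rcases Nat.lt_or_ge i n with hin | hin
      · simpa [Nat.le_of_lt hin, Nat.succ_le_of_lt hin] using hq'rel i hin
      · have : i = n := by omega
        subst this
        simp [hq'n, hfix1, hfix2]

/-- The finite condition implying membership in `USet`. -/
lemma bcond_mem_USet {w : ℕ → X} {n : ℕ}
    (hb : ∀ h ∈ N, S.actW h (segFrom w 0 n) = segFrom w 0 n →
      S.resW h (segFrom w 0 n) = 1) : w ∈ USet S N := by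
  intro q hqN hq
  have hres := S.path_resW (fun i => (hq i).1) 0 n
  have hact := S.path_actW hq 0 n
  rw [Nat.zero_add] at hres hact
  rw [← hres]
  exact hb _ (hqN n) hact

/-- Conversely, membership in `USet` gives a finite certificate (via compactness). -/
lemma mem_USet_bcond (hcl : ∀ g ∈ N, ∀ x : X, S.res g x ∈ N) {w : ℕ → X}
    (hw : w ∈ USet S N) :
    ∃ n : ℕ, ∀ h ∈ N, S.actW h (segFrom w 0 n) = segFrom w 0 n →
      S.resW h (segFrom w 0 n) = 1 := by
  by_contra hcon
  push_neg at hcon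
  choose hfn hfnN hfnfix hfnne using hcon
  letI : TopologicalSpace G := ⊥
  haveI : DiscreteTopology G := ⟨rfl⟩
  set Z : ℕ → Set (ℕ → G) := fun n =>
    {q | (∀ i, q i ∈ N) ∧ q 0 ≠ 1 ∧
      ∀ i < n, S.res (q (i + 1)) (w i) = q i ∧ S.toFun (q (i + 1)) (w i) = w i} with hZ
  have hZc : ∀ n, IsClosed (Z n) := by
    intro n
    have h1 : IsClosed {q : ℕ → G | ∀ i, q i ∈ N} := by
      rw [show {q : ℕ → G | ∀ i, q i ∈ N} = ⋂ i, (fun q : ℕ → G => q i) ⁻¹' ↑N by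
        ext q; simp [Set.mem_iInter]]
      exact isClosed_iInter fun i => (isClosed_discrete _).preimage (continuous_apply i)
    have h2 : IsClosed {q : ℕ → G | q 0 ≠ 1} := by
      have : {q : ℕ → G | q 0 ≠ 1} = (fun q : ℕ → G => q 0) ⁻¹' {g : G | g ≠ 1} := rfl
      rw [this]
      exact IsClosed.preimage (continuous_apply 0) (isClosed_discrete _)
    have h3 : ∀ i : ℕ, IsClosed {q : ℕ → G |
        S.res (q (i + 1)) (w i) = q i ∧ S.toFun (q (i + 1)) (w i) = w i} := by
      intro i
      have : {q : ℕ → G | S.res (q (i + 1)) (w i) = q i ∧ S.toFun (q (i + 1)) (w i) = w i}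
          = (fun q : ℕ → G => (q (i + 1), q i)) ⁻¹'
            {x : G × G | S.res x.1 (w i) = x.2 ∧ S.toFun x.1 (w i) = w i} := rfl
      rw [this]
      exact IsClosed.preimage ((continuous_apply (i + 1)).prodMk (continuous_apply i))
        (isClosed_discrete _)
    have : Z n = {q : ℕ → G | ∀ i, q i ∈ N} ∩ ({q | q 0 ≠ 1} ∩
        ⋂ i ∈ Finset.range n, {q : ℕ → G |
          S.res (q (i + 1)) (w i) = q i ∧ S.toFun (q (i + 1)) (w i) = w i}) := by
      ext q; simp [hZ, Set.mem_iInter, and_assoc]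
    rw [this]
    exact h1.inter (h2.inter (isClosed_biInter fun i _ => h3 i))
  have hZd : ∀ n, Z (n + 1) ⊆ Z n := by
    intro n q hq
    exact ⟨hq.1, hq.2.1, fun i hi => hq.2.2 i (by omega)⟩
  have hZne : ∀ n, (Z n).Nonempty := by
    intro n
    obtain ⟨q, hq0, hqn, hqN, hqrel⟩ := S.exists_finpath hcl n (hfn n) (hfnN n) (hfnfix n)
    exact ⟨q, hqN, by rw [hq0]; exact hfnne n, hqrel⟩
  have hZ0 : IsCompact (Z 0) := by
    have hNc : IsCompact {q : ℕ → G | ∀ i, q i ∈ N} := by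
      have : {q : ℕ → G | ∀ i, q i ∈ N} = Set.pi Set.univ (fun _ : ℕ => (↑N : Set G)) := by
        ext q; simp [Set.mem_pi]
      rw [this]
      exact isCompact_univ_pi fun i => (N : Set G).toFinite.isCompact
    exact hNc.of_isClosed_subset (hZc 0) fun q hq => hq.1
  obtain ⟨q, hq⟩ := IsCompact.nonempty_iInter_of_sequence_nonempty_isCompact_isClosed
    Z hZd hZne hZ0 hZc
  simp only [Set.mem_iInter, hZ, Set.mem_setOf_eq] at hq
  have hqN := (hq 0).1
  have hqne := (hq 0).2.1
  exact hqne (hw q hqN fun i => (hq (i + 1)).2.2 i (by omega))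


lemma segFrom_of_getD (d : X) :
    ∀ (l : List X) (f : ℕ → X), (∀ i < l.length, f i = l.getD (l.length - 1 - i) d) →
      segFrom f 0 l.length = l := by
  intro l
  induction l with
  | nil => intro f _; rfl
  | cons x t ih =>
    intro f hf
    show f (0 + t.length) :: segFrom f 0 t.length = x :: t
    have h1 : f (0 + t.length) = x := by
      have := hf t.length (by simp)
      simpa using this
    have h2 : segFrom f 0 t.length = t := by
      apply ih
      intro i hi
      have := hf i (by simp; omega)
      rw [this]
      have hidx : (x :: t).length - 1 - i = (t.length - 1 - i) + 1 := by
        simp; omega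
      rw [hidx, List.getD_cons_succ]
    rw [h1, h2]

variable (N)

lemma isOpen_USet (hcl : ∀ g ∈ N, ∀ x : X, S.res g x ∈ N)
    [TopologicalSpace X] [DiscreteTopology X] : IsOpen (USet S N) := by
  have hdecomp : USet S N = ⋃ n : ℕ, {w : ℕ → X | ∀ h ∈ N,
      S.actW h (segFrom w 0 n) = segFrom w 0 n → S.resW h (segFrom w 0 n) = 1} := by
    ext w
    simp only [Set.mem_iUnion, Set.mem_setOf_eq]
    constructor
    · exact fun hw => S.mem_USet_bcond hcl hw
    · rintro ⟨n, hn⟩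
      exact S.bcond_mem_USet hn
  rw [hdecomp]
  refine isOpen_iUnion fun n => ?_
  refine isOpen_iff_forall_mem_open.2 fun w hw => ?_
  refine ⟨⋂ i ∈ Finset.range n, (fun w' : ℕ → X => w' i) ⁻¹' {w i}, ?_, ?_, ?_⟩
  · intro w' hw'
    simp only [Set.mem_iInter, Set.mem_preimage, Set.mem_singleton_iff,
      Finset.mem_range] at hw'
    have hseg : segFrom w' 0 n = segFrom w 0 n :=
      segFrom_congr n fun i hi => by simpa using hw' i hi
    simpa only [Set.mem_setOf_eq, hseg] using hw
  · exact isOpen_biInter_finset fun i _ =>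
      (continuous_apply i).isOpen_preimage _ (isOpen_discrete _)
  · simp

lemma dense_USet [Nonempty X] [TopologicalSpace X] [DiscreteTopology X]
    {V : List X} (hV : ∀ h ∈ N, S.actW h V = V → S.resW h V = 1) :
    Dense (USet S N) := by
  classical
  set d := Classical.arbitrary X
  set vfun : ℕ → X := fun i => V.getD (V.length - 1 - i) d with hvfun
  have hvf : segFrom vfun 0 V.length = V := segFrom_of_getD d V vfun fun i _ => rfl
  rw [dense_iff_inter_open]
  rintro U hU ⟨w, hw⟩
  obtain ⟨I, u, hIu, hpi⟩ := isOpen_pi_iff.1 hU w hw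
  set n := I.sup id + 1 with hn
  set w' : ℕ → X := fun j => if j < n then w j else vfun (j - n) with hw'
  have hblk : segFrom w' n V.length = V := by
    have : segFrom w' n V.length = segFrom vfun 0 V.length := by
      apply segFrom_congr
      intro i _
      simp only [hw', Nat.zero_add]
      rw [if_neg (by omega)]
      congr 1
      omega
    rw [this, hvf]
  refine ⟨w', ?_, S.block_mem_USet hV hblk⟩
  apply hpi
  intro a ha
  have han : a < n := by
    have : a ≤ I.sup id := Finset.le_sup (f := id) ha
    omega
  simp only [hw', if_pos han]
  exact (hIu a ha).2

/-- Saturation of `USet` under the asymptotic equivalence relation. -/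
lemma USet_saturated (hN : S.IsNucleus N) {w : ℕ → X} (hw : w ∈ USet S N)
    (w' : ℕ → X) (hww' : ∃ h : G, S.MoorePath N w w' h) : w' ∈ USet S N := by
  classical
  obtain ⟨h, a, ha0, haN, harel⟩ := hww'
  intro b hbN hbrel
  -- the conjugated path
  set c : ℕ → G := fun i => (a i)⁻¹ * b i * a i with hc
  have hcrel : ∀ i : ℕ, S.res (c (i + 1)) (w i) = c i ∧ S.toFun (c (i + 1)) (w i) = w i := by
    intro i
    have hta : S.toFun (a (i + 1)) (w i) = w' i := (harel i).2
    have hra : S.res (a (i + 1)) (w i) = a i := (harel i).1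
    have htb : S.toFun (b (i + 1)) (w' i) = w' i := (hbrel i).2
    have hrb : S.res (b (i + 1)) (w' i) = b i := (hbrel i).1
    constructor
    · have e1 : S.res ((a (i+1))⁻¹ * b (i+1) * a (i+1)) (w i)
          = S.res ((a (i+1))⁻¹ * b (i+1)) (S.toFun (a (i+1)) (w i)) * S.res (a (i+1)) (w i) :=
        S.res_mul _ _ _
      rw [hta, hra] at e1
      have e2 : S.res ((a (i+1))⁻¹ * b (i+1)) (w' i)
          = S.res (a (i+1))⁻¹ (S.toFun (b (i+1)) (w' i)) * S.res (b (i+1)) (w' i) :=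
        S.res_mul _ _ _
      rw [htb, hrb] at e2
      have e3 : S.res (a (i+1))⁻¹ (w' i) = (a i)⁻¹ := by
        rw [← hta, S.res_inv, hra]
      rw [e3] at e2
      show S.res ((a (i+1))⁻¹ * b (i+1) * a (i+1)) (w i) = (a i)⁻¹ * b i * a i
      rw [e1, e2, mul_assoc]
    · show S.toFun ((a (i+1))⁻¹ * b (i+1) * a (i+1)) (w i) = w i
      rw [S.toFun_mul, S.toFun_mul, hta, htb, ← hta, S.toFun_inv]
  -- all values of `c` lie in `N`
  have hcN : ∀ i, c i ∈ N := by
    set M : Finset G := (N ×ˢ N).image fun x : G × G => x.1⁻¹ * x.2 * x.1 with hM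
    have hcM : ∀ i, c i ∈ M := fun i =>
      Finset.mem_image.2 ⟨(a i, b i), Finset.mem_product.2 ⟨haN i, hbN i⟩, rfl⟩
    set kf : G → ℕ := fun g => (hN.2.1 g).choose with hkf
    set k : ℕ := M.sup kf with hk
    intro i
    have : c i = S.resW (c (i + k)) (segFrom w i k) :=
      (S.path_resW (fun j => (hcrel j).1) i k).symm
    rw [this]
    apply (hN.2.1 (c (i + k))).choose_spec
    rw [segFrom_length]
    exact Finset.le_sup (f := kf) (hcM (i + k))
  have := hw c hcN hcrel
  have hb0 : b 0 = 1 := by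
    have h1 : (a 0)⁻¹ * b 0 * a 0 = 1 := this
    have := congrArg (fun g => a 0 * g * (a 0)⁻¹) h1
    simpa [mul_assoc] using this
  exact hb0
end SSA

section Atoms
variable {X : Type*} [Fintype X] [MeasurableSpace X]

/-- The measurable atom of a point. -/
def matom (x : X) : Set X := ⋂₀ {A : Set X | MeasurableSet A ∧ x ∈ A}

lemma measurableSet_matom (x : X) : MeasurableSet (matom x) := by
  apply Set.Finite.measurableSet_sInter (Set.toFinite _)
  exact fun A hA => hA.1

lemma mem_matom_self (x : X) : x ∈ matom x := fun A hA => hA.2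

lemma mem_matom_iff {x y : X} : y ∈ matom x ↔ ∀ A : Set X, MeasurableSet A → x ∈ A → y ∈ A := by
  constructor
  · intro h A hA hx
    exact h A ⟨hA, hx⟩
  · intro h A hA
    exact h A hA.1 hA.2

lemma matom_symm {x y : X} (h : y ∈ matom x) : x ∈ matom y := by
  rw [mem_matom_iff] at h ⊢
  intro A hA hy
  by_contra hx
  exact (h Aᶜ hA.compl hx) hy

lemma matom_trans {x y z : X} (hy : y ∈ matom x) (hz : z ∈ matom y) : z ∈ matom x := by
  rw [mem_matom_iff] at hy hz ⊢
  exact fun A hA hx => hz A hA (hy A hA hx)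

lemma matom_eq_of_mem {x y : X} (h : y ∈ matom x) : matom y = matom x := by
  ext z
  exact ⟨fun hz => matom_trans h hz, fun hz => matom_trans (matom_symm h) hz⟩

/-- Measurable sets in the product space are saturated under pointwise atom-equivalence. -/
lemma measurableSet_saturated {C : Set (ℕ → X)} (hC : MeasurableSet C)
    {w w' : ℕ → X} (hw : w ∈ C) (hrel : ∀ i, w' i ∈ matom (w i)) : w' ∈ C := by
  classical
  set m' : MeasurableSpace (ℕ → X) :=
    { MeasurableSet' := fun C => ∀ w ∈ C, ∀ w' : ℕ → X, (∀ i, w' i ∈ matom (w i)) → w' ∈ C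
      measurableSet_empty := fun w hw => absurd hw (Set.notMem_empty w)
      measurableSet_compl := by
        intro C hC w hw w' hrel hw'
        exact hw (hC w' hw' w fun i => matom_symm (hrel i))
      measurableSet_iUnion := by
        intro f hf w hw w' hrel
        obtain ⟨i, hi⟩ := Set.mem_iUnion.1 hw
        exact Set.mem_iUnion.2 ⟨i, hf i w hi w' hrel⟩ } with hm'
  have hle : (MeasurableSpace.pi : MeasurableSpace (ℕ → X)) ≤ m' := by
    apply iSup_le
    intro i
    rintro C ⟨A, hA, rfl⟩
    intro w hw w' hrel
    exact mem_matom_iff.1 (hrel i) A hA hw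
  exact hle C hC w hw w' hrel




/-- Atom cylinders. -/
def ACylG {X : Type*} [MeasurableSpace X] (n : ℕ) (f : ℕ → X) : Set (ℕ → X) :=
  {w | ∀ i < n, w i ∈ matom (f i)}

lemma measurableSet_ACylG (n : ℕ) (f : ℕ → X) : MeasurableSet (ACylG n f) := by
  have : ACylG n f = ⋂ i ∈ Finset.range n, (fun w : ℕ → X => w i) ⁻¹' matom (f i) := by
    ext w; simp [ACylG]
  rw [this]
  exact MeasurableSet.biInter (Set.to_countable _)
    fun i _ => measurable_pi_apply i (measurableSet_matom (f i))

variable (p : X → ℝ≥0∞) (μ0 : Measure (ℕ → X))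
variable (hμ : ∀ u : List X, μ0 (Cyl u) = (u.map p).prod)

include hμ

lemma Cyl_univ : μ0 Set.univ = 1 := by
  have : Cyl ([] : List X) = Set.univ := by
    ext w; simp [Cyl]
  rw [← this, hμ]
  simp

lemma measure_ACylG (n : ℕ) (f : ℕ → X) :
    μ0 (ACylG n f) = ∏ i ∈ Finset.range n, p (f i) := by
  classical
  set u : List X := List.ofFn (fun i : Fin n => f i) with hu
  have hulen : u.length = n := by simp [hu]
  have huget : ∀ (i : ℕ) (hi : i < u.length), u.get ⟨i, hi⟩ = f i := by
    intro i hi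
    simp [hu]
  have hval : (u.map p).prod = ∏ i ∈ Finset.range n, p (f i) := by
    rw [hu, List.map_ofFn, List.prod_ofFn]
    rw [show ((fun i : Fin n => (p ∘ fun j : Fin n => f ↑j) i)) = fun i : Fin n => p (f ↑i) from rfl]
    exact Fin.prod_univ_eq_prod_range (fun i => p (f i)) n
  apply le_antisymm
  · -- ACylG is contained in every measurable cover of Cyl u
    set C := toMeasurable μ0 (Cyl u) with hC
    have hsubC : ACylG n f ⊆ C := by
      intro w hw
      set w2 : ℕ → X := fun i => if i < n then f i else w i with hw2
      have hw2C : w2 ∈ Cyl u := by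
        intro i hi
        rw [huget i hi, hw2]
        simp only
        rw [if_pos (by omega)]
      have : ∀ i, w i ∈ matom (w2 i) := by
        intro i
        by_cases hi : i < n
        · simpa [hw2, hi] using hw i hi
        · simp only [hw2, if_neg hi]
          exact mem_matom_self _
      exact measurableSet_saturated (measurableSet_toMeasurable μ0 _)
        (subset_toMeasurable μ0 _ hw2C) this
    calc μ0 (ACylG n f) ≤ μ0 C := measure_mono hsubC
      _ = μ0 (Cyl u) := measure_toMeasurable _
      _ = _ := by rw [hμ, hval]
  · rw [← hval, ← hμ]
    apply measure_mono
    intro w hw i hi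
    have h2 := hw i (by omega)
    rw [huget i (by omega)] at h2
    rw [h2]
    exact mem_matom_self _

omit hμ

def asetoid (X : Type*) [MeasurableSpace X] : Setoid X :=
  ⟨fun a b => matom a = matom b, ⟨fun _ => rfl, Eq.symm, Eq.trans⟩⟩

noncomputable def mrep (x : X) : X := (@Quotient.mk _ (asetoid X) x).out

lemma matom_mrep (x : X) : matom (mrep x) = matom x :=
  @Quotient.mk_out _ (asetoid X) x

lemma mrep_eq_of {x y : X} (h : matom x = matom y) : mrep x = mrep y :=
  congrArg Quotient.out (Quotient.sound (α := X) (s := asetoid X) h)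

lemma mrep_mrep (x : X) : mrep (mrep x) = mrep x := mrep_eq_of (matom_mrep x)

lemma mem_matom_mrep (x : X) : x ∈ matom (mrep x) := by
  rw [matom_mrep]; exact mem_matom_self x

include hμ

lemma p_matom_congr {x y : X} (h : matom x = matom y) : p x = p y := by
  have h1 := measure_ACylG p μ0 hμ 1 (fun _ => x)
  have h2 := measure_ACylG p μ0 hμ 1 (fun _ => y)
  have : ACylG 1 (fun _ : ℕ => x) = ACylG 1 (fun _ : ℕ => y) := by
    unfold ACylG
    simp only [h]
  rw [this, h2] at h1
  simpa using h1.symm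

lemma p_mrep (x : X) : p (mrep x) = p x := p_matom_congr p μ0 hμ (matom_mrep x)

lemma sum_p_mrep [DecidableEq X] : ∑ y ∈ Finset.univ.image (mrep (X := X)), p y = 1 := by
  classical
  have hdisj : ((Finset.univ.image (mrep (X := X)) : Finset X) : Set X).PairwiseDisjoint
      (fun y => ACylG 1 (fun _ : ℕ => y)) := by
    intro y hy z hz hyz
    obtain ⟨y0, _, rfl⟩ := Finset.mem_image.1 hy
    obtain ⟨z0, _, rfl⟩ := Finset.mem_image.1 hz
    refine Set.disjoint_left.2 fun w hw hw' => hyz ?_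
    have h1 : w 0 ∈ matom (mrep y0) := hw 0 (by omega)
    have h2 : w 0 ∈ matom (mrep z0) := hw' 0 (by omega)
    have : matom (mrep y0) = matom (mrep z0) :=
      (matom_eq_of_mem h1).symm.trans (matom_eq_of_mem h2)
    calc mrep y0 = mrep (mrep y0) := (mrep_mrep y0).symm
      _ = mrep (mrep z0) := mrep_eq_of this
      _ = mrep z0 := mrep_mrep z0
  have hcover : ⋃ y ∈ Finset.univ.image (mrep (X := X)), ACylG 1 (fun _ : ℕ => y)
      = Set.univ := by
    apply Set.eq_univ_iff_forall.2
    intro w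
    refine Set.mem_biUnion (Finset.mem_image.2 ⟨w 0, Finset.mem_univ _, rfl⟩) ?_
    intro i hi
    interval_cases i
    exact mem_matom_mrep (w 0)
  have hadd := measure_biUnion_finset (μ := μ0) hdisj
    (fun y _ => measurableSet_ACylG 1 (fun _ : ℕ => y))
  rw [hcover, Cyl_univ p μ0 hμ] at hadd
  rw [hadd]
  apply Finset.sum_congr rfl
  intro y _
  rw [measure_ACylG p μ0 hμ]
  simp

omit hμ

lemma prod_blocks (h : ℕ → ℝ≥0∞) (L : ℕ) :
    ∀ K, ∏ j ∈ Finset.range (K * L), h j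
      = ∏ k ∈ Finset.range K, ∏ i ∈ Finset.range L, h (k * L + i) := by
  intro K
  induction K with
  | zero => simp
  | succ K ih =>
    have : (K + 1) * L = K * L + L := by ring
    rw [this, Finset.prod_range_add, ih, Finset.prod_range_succ]

include hμ

/-- The main measure estimate: a set containing all sequences having a fixed block
somewhere has full measure. -/
lemma measure_eq_one_of_blocks (hp : ∀ x, p x ≠ 0) (U : Set (ℕ → X)) (vfun : ℕ → X) (L : ℕ)
    (hblk : ∀ (w : ℕ → X) (m : ℕ), (∀ i < L, w (m + i) = vfun i) → w ∈ U) :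
    μ0 U = 1 := by
  classical
  rcases Nat.eq_zero_or_pos L with hL | hL
  · have : U = Set.univ := Set.eq_univ_iff_forall.2 fun w => hblk w 0 (by omega)
    rw [this]
    exact Cyl_univ p μ0 hμ
  set C := toMeasurable μ0 U with hC
  set D : ℕ → Set (ℕ → X) := fun K =>
    {w | ∀ k < K, ∃ i < L, w (k * L + i) ∉ matom (vfun i)} with hD
  have hCD : ∀ K, Cᶜ ⊆ D K := by
    intro K w hw
    by_contra hcon
    simp only [hD, Set.mem_setOf_eq] at hcon
    push_neg at hcon
    obtain ⟨k, hkK, hk⟩ := hcon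
    set w2 : ℕ → X := fun j => if k * L ≤ j ∧ j < k * L + L then vfun (j - k * L) else w j
      with hw2
    have hw2U : w2 ∈ U := by
      apply hblk w2 (k * L)
      intro i hi
      simp only [hw2]
      rw [if_pos (by omega)]
      congr 1
      omega
    have hrel : ∀ j, w j ∈ matom (w2 j) := by
      intro j
      by_cases hj : k * L ≤ j ∧ j < k * L + L
      · simp only [hw2, if_pos hj]
        have h3 := hk (j - k * L) (by omega)
        have h2 : k * L + (j - k * L) = j := by omega
        rw [h2] at h3
        exact h3
      · simp only [hw2, if_neg hj]
        exact mem_matom_self _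
    exact hw (measurableSet_saturated (measurableSet_toMeasurable μ0 _)
      (subset_toMeasurable μ0 _ hw2U) hrel)
  -- the per-block sum
  set R : Finset X := Finset.univ.image (mrep (X := X)) with hR
  set BadBlk : Finset (Fin L → X) :=
    (Fintype.piFinset fun _ : Fin L => R).filter (fun g => ∃ i : Fin L, g i ≠ mrep (vfun ↑i)) with hBB
  set c : ℝ≥0∞ := ∏ i : Fin L, p (vfun i) with hc
  set B : ℝ≥0∞ := ∑ g ∈ BadBlk, ∏ i : Fin L, p (g i) with hB
  have htotal : ∑ g ∈ Fintype.piFinset (fun _ : Fin L => R), ∏ i : Fin L, p (g i) = 1 := by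
    rw [← Finset.prod_univ_sum]
    rw [Finset.prod_congr rfl fun i _ => sum_p_mrep p μ0 hμ]
    simp
  have hgood : ((Fintype.piFinset fun _ : Fin L => R).filter
      (fun g => ¬∃ i : Fin L, g i ≠ mrep (vfun ↑i)))
      = ({fun i : Fin L => mrep (vfun ↑i)} : Finset (Fin L → X)) := by
    ext g
    rw [Finset.mem_filter, Finset.mem_singleton]
    constructor
    · rintro ⟨_, hg⟩
      push_neg at hg
      exact funext hg
    · rintro rfl
      refine ⟨Fintype.mem_piFinset.2 fun i =>
        Finset.mem_image.2 ⟨vfun i, Finset.mem_univ _, rfl⟩, ?_⟩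
      push_neg
      exact fun i => rfl
  have hBc : B + c = 1 := by
    rw [hB, ← htotal, ← Finset.sum_filter_add_sum_filter_not
      (Fintype.piFinset fun _ : Fin L => R) (fun g => ∃ i : Fin L, g i ≠ mrep (vfun ↑i))]
    congr 1
    rw [hgood, Finset.sum_singleton, hc]
    exact Finset.prod_congr rfl fun i _ => (p_mrep p μ0 hμ (vfun ↑i)).symm
  have hcne : c ≠ 0 := by
    rw [hc]
    exact Finset.prod_ne_zero_iff.2 fun i _ => hp (vfun i)
  have hc1 : c ≤ 1 := by
    rw [← hBc]; exact le_add_self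
  have hBlt : B < 1 := by
    have : B = 1 - c := ENNReal.eq_sub_of_add_eq (by exact lt_of_le_of_lt hc1 one_lt_top |>.ne) hBc
    rw [this]
    exact ENNReal.sub_lt_self one_ne_top one_ne_zero hcne
  -- the cover of D K
  have hDK : ∀ K, μ0 (D K) ≤ B ^ K := by
    intro K
    set fF : (Fin K → Fin L → X) → ℕ → X := fun F j =>
      if h : j < K * L then F ⟨j / L, by
          rw [Nat.div_lt_iff_lt_mul hL]; omega⟩ ⟨j % L, Nat.mod_lt _ hL⟩
      else vfun 0 with hfF
    have hcover : D K ⊆ ⋃ F ∈ Fintype.piFinset (fun _ : Fin K => BadBlk),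
        ACylG (K * L) (fF F) := by
      intro w hw
      set F : Fin K → Fin L → X := fun k i => mrep (w (k * L + i)) with hF
      have hFmem : F ∈ Fintype.piFinset (fun _ : Fin K => BadBlk) := by
        refine Fintype.mem_piFinset.2 fun k => Finset.mem_filter.2 ⟨?_, ?_⟩
        · exact Fintype.mem_piFinset.2 fun i =>
            Finset.mem_image.2 ⟨w (k * L + i), Finset.mem_univ _, rfl⟩
        · obtain ⟨i, hiL, hi⟩ := hw k k.isLt
          refine ⟨⟨i, hiL⟩, fun heq => hi ?_⟩
          have : matom (w (↑k * L + i)) = matom (vfun i) := by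
            rw [← matom_mrep (w (↑k * L + i)), ← matom_mrep (vfun i)]
            rw [show mrep (w (↑k * L + i)) = mrep (vfun i) from heq]
          rw [← this]
          exact mem_matom_self _
      refine Set.mem_biUnion hFmem ?_
      intro j hj
      have hjd : j / L < K := by rw [Nat.div_lt_iff_lt_mul hL]; omega
      have hfFj : fF F j = mrep (w (j / L * L + j % L)) := by
        simp only [hfF]
        rw [dif_pos hj]
      have hdm : j / L * L + j % L = j := by
        rw [Nat.mul_comm]
        exact Nat.div_add_mod j L
      rw [hfFj, hdm]
      exact mem_matom_mrep _
    calc μ0 (D K) ≤ ∑ F ∈ Fintype.piFinset (fun _ : Fin K => BadBlk),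
        μ0 (ACylG (K * L) (fF F)) := le_trans (measure_mono hcover)
          (measure_biUnion_finset_le _ _)
      _ = ∑ F ∈ Fintype.piFinset (fun _ : Fin K => BadBlk),
          ∏ k : Fin K, ∏ i : Fin L, p (F k i) := by
        apply Finset.sum_congr rfl
        intro F _
        rw [measure_ACylG p μ0 hμ, prod_blocks]
        rw [← Fin.prod_univ_eq_prod_range (fun k => ∏ i ∈ Finset.range L,
          p (fF F (k * L + i))) K]
        apply Finset.prod_congr rfl
        intro k _
        rw [← Fin.prod_univ_eq_prod_range (fun i => p (fF F (↑k * L + i))) L]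
        apply Finset.prod_congr rfl
        intro i _
        congr 1
        have hjlt : ↑k * L + ↑i < K * L := by
          have h1 : (↑k + 1) * L ≤ K * L := Nat.mul_le_mul_right L k.isLt
          have : ↑k * L + ↑i < (↑k + 1) * L := by
            have := i.isLt
            nlinarith
          omega
        simp only [hfF]
        rw [dif_pos hjlt]
        congr 1
        · apply Fin.ext
          show (↑k * L + ↑i) / L = ↑k
          rw [Nat.add_comm, Nat.add_mul_div_right _ _ hL, Nat.div_eq_of_lt i.isLt]
          omega
        · apply Fin.ext
          show (↑k * L + ↑i) % L = ↑i
          rw [Nat.add_comm, Nat.add_mul_mod_self_right]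
          exact Nat.mod_eq_of_lt i.isLt
      _ = ∏ k : Fin K, B := by
        rw [hB]
        exact (Finset.prod_univ_sum (fun _ : Fin K => BadBlk)
          (fun k g => ∏ i : Fin L, p (g i))).symm
      _ = B ^ K := by simp
  -- conclude
  have hCc : μ0 Cᶜ = 0 := by
    refine le_antisymm ?_ zero_le
    refine ge_of_tendsto' (ENNReal.tendsto_pow_atTop_nhds_zero_of_lt_one hBlt) fun K => ?_
    exact le_trans (measure_mono (hCD K)) (hDK K)
  have hfull := measure_add_measure_compl (μ := μ0) (measurableSet_toMeasurable μ0 U)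
  rw [Cyl_univ p μ0 hμ] at hfull
  rw [show Cᶜ = (toMeasurable μ0 U)ᶜ from rfl] at hCc
  rw [hCc, add_zero] at hfull
  exact (measure_toMeasurable U).symm.trans hfull

end Atoms

/-- For a contracting faithful self-similar action with nucleus `N`, the set `𝒰` is open and
dense in `X^{-ω}`, has measure `1` for every Bernoulli measure with positive letter weights,
and is saturated with respect to the asymptotic equivalence relation on `X^{-ω}`. -/
theorem stmt_16 {G X : Type*} [Group G] [Fintype X] [Nonempty X]
    [TopologicalSpace X] [DiscreteTopology X] [MeasurableSpace X]
    (S : SSA G X) (N : Finset G) (hN : S.IsNucleus N)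
    (hfaith : ∀ h ∈ N, h ≠ 1 → ∃ v : List X, S.actW h v ≠ v) :
    IsOpen (USet S N) ∧ Dense (USet S N) ∧
    (∀ (p : X → ℝ≥0∞) (μ0 : Measure (ℕ → X)), (∀ x, p x ≠ 0) →
      (∀ u : List X, μ0 (Cyl u) = (u.map p).prod) → μ0 (USet S N) = 1) ∧
    (∀ w ∈ USet S N, ∀ w' : ℕ → X, (∃ h : G, S.MoorePath N w w' h) → w' ∈ USet S N) := by
  classical
  obtain ⟨V, hV⟩ := S.exists_keyword N hN.1 hfaith
  refine ⟨S.isOpen_USet N hN.1, S.dense_USet N hV, ?_,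
    fun w hw w' hww' => S.USet_saturated N hN hw w' hww'⟩
  intro p μ0 hp hμ
  set d := Classical.arbitrary X
  set vfun : ℕ → X := fun i => V.getD (V.length - 1 - i) d with hvfun
  have hvf : SSA.segFrom vfun 0 V.length = V := SSA.segFrom_of_getD d V vfun fun i _ => rfl
  apply measure_eq_one_of_blocks p μ0 hμ hp _ vfun V.length
  intro w m hw
  apply S.block_mem_USet hV
  have : SSA.segFrom w m V.length = SSA.segFrom vfun 0 V.length :=
    SSA.segFrom_congr _ fun i hi => by rw [Nat.zero_add]; exact hw i hi
  rw [this, hvf]
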